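/- arXiv:2108.12142 — 2 statements merged into one kernel-verified Lean document; each statement's English description precedes it below -/
import Mathlib

section
/- Let L be the Laplacian matrix of a weight-balanced directed graph G (i.e., row sums equal column sums of the adjacency matrix). Then L + Lᵀ is positive semidefinite. Conversely, if L + Lᵀ is positive semidefinite for the Laplacian of a directed graph with nonnegative weights, then G is weight-balanced. -/
open Matrix
/-- A weighted digraph with nonnegative adjacency matrix `A` and Laplacian
`L = Δ - A` is weight-balanced if and only if `L + Lᵀ` is positive semidefinite. -/
theorem weight_balanced_iff_laplacian_posSemidef {N : ℕ}
    (A : Matrix (Fin N) (Fin N) ℝ) (hA : ∀ i j, 0 ≤ A i j)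
    (L : Matrix (Fin N) (Fin N) ℝ)
    (hL : L = Matrix.diagonal (fun i => ∑ j, A i j) - A) :
    (∀ i, ∑ j, A i j = ∑ j, A j i) ↔ (L + Lᵀ).PosSemidef := by
  have quad : ∀ (M : Matrix (Fin N) (Fin N) ℝ) (x : Fin N → ℝ),
      x ⬝ᵥ (M *ᵥ x) = ∑ i, ∑ j, M i j * x i * x j := by
    intro M x
    simp only [dotProduct, mulVec, dotProduct, Finset.mul_sum]
    exact Finset.sum_congr rfl fun i _ => Finset.sum_congr rfl fun j _ => by ring
  have rowL : ∀ i, ∑ j, L i j = 0 := by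
    intro i
    simp only [hL, Matrix.sub_apply, Matrix.diagonal_apply, Finset.sum_sub_distrib,
      Finset.sum_ite_eq, Finset.mem_univ, if_true, sub_self]
  have colL : ∀ k, ∑ i, L i k = (∑ j, A k j) - (∑ i, A i k) := by
    intro k
    simp only [hL, Matrix.sub_apply, Matrix.diagonal_apply, Finset.sum_sub_distrib,
      Finset.sum_ite_eq', Finset.mem_univ, if_true]
  have rowM : ∀ i, ∑ j, (L + Lᵀ) i j = (∑ j, A i j) - (∑ j, A j i) := by
    intro i
    simp only [Matrix.add_apply, Matrix.transpose_apply, Finset.sum_add_distrib,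
      rowL, colL, zero_add]
  have colM : ∀ k, ∑ i, (L + Lᵀ) i k = (∑ j, A k j) - (∑ j, A j k) := by
    intro k
    simp only [Matrix.add_apply, Matrix.transpose_apply, Finset.sum_add_distrib,
      rowL, colL, add_zero]
  constructor
  · intro h
    refine Matrix.posSemidef_iff_dotProduct_mulVec.mpr ⟨by simpa using Matrix.isHermitian_add_transpose_self L, ?_⟩
    intro x
    have hx : (star x : Fin N → ℝ) = x := by simp
    rw [hx, quad]
    have key : ∑ i, ∑ j, (L + Lᵀ) i j * x i * x j
        = ∑ i, ∑ j, A i j * (x i - x j) ^ 2 := by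
      have hM : ∀ i j, (L + Lᵀ) i j * x i * x j =
          ((if i = j then (∑ t, A i t) * x i * x j else 0)
            + (if j = i then (∑ t, A j t) * x i * x j else 0))
            - (A i j * x i * x j + A j i * x i * x j) := by
        intro i j
        rcases eq_or_ne i j with rfl | hij
        · simp [hL, Matrix.diagonal_apply]; ring
        · simp [hL, Matrix.diagonal_apply, hij, hij.symm]; ring
      have hR : ∀ i j : Fin N, A i j * (x i - x j) ^ 2 =
          A i j * x i ^ 2 + A i j * x j ^ 2 - (A i j * x i * x j + A i j * x i * x j) := by
        intro i j; ring
      simp only [hM, hR, Finset.sum_sub_distrib, Finset.sum_add_distrib,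
        Finset.sum_ite_eq, Finset.sum_ite_eq', Finset.mem_univ, if_true]
      have c1 : ∑ i : Fin N, ∑ j, A j i * x i * x j = ∑ i : Fin N, ∑ j, A i j * x i * x j := by
        rw [Finset.sum_comm]
        exact Finset.sum_congr rfl fun i _ => Finset.sum_congr rfl fun j _ => by ring
      have c2 : ∑ i : Fin N, ∑ j, A i j * x j ^ 2 = ∑ i : Fin N, (∑ t, A i t) * x i ^ 2 := by
        rw [Finset.sum_comm]
        refine Finset.sum_congr rfl fun j _ => ?_
        rw [← Finset.sum_mul, ← h]
      have c3 : ∀ i : Fin N, ∑ j, A i j * x i ^ 2 = (∑ t, A i t) * x i ^ 2 := by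
        intro i; rw [← Finset.sum_mul]
      have c4 : ∀ i : Fin N, (∑ t, A i t) * x i * x i = (∑ t, A i t) * x i ^ 2 := by
        intro i; ring
      simp only [c3, c4]
      rw [c1, c2]
    rw [key]
    exact Finset.sum_nonneg fun i _ => Finset.sum_nonneg fun j _ =>
      mul_nonneg (hA i j) (sq_nonneg _)
  · intro hpsd k
    set M : Matrix (Fin N) (Fin N) ℝ := L + Lᵀ with hMdef
    set Q : ℝ := (∑ j, A k j) - (∑ j, A j k) with hQ
    have hMkk : M k k = 2 * ((∑ j, A k j) - A k k) := by
      simp [hMdef, hL, Matrix.diagonal_apply]; ring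
    have hmk : 0 ≤ M k k := by
      rw [hMkk]
      have : A k k ≤ ∑ j, A k j :=
        Finset.single_le_sum (fun j _ => hA k j) (Finset.mem_univ k)
      linarith
    -- the quadratic form at x = 1 + s · e_k
    have hq : ∀ s : ℝ, 0 ≤ 2 * s * Q + s ^ 2 * M k k := by
      intro s
      have h0 := hpsd.dotProduct_mulVec_nonneg (fun i => 1 + s * (if i = k then 1 else 0))
      rw [show (star (fun i => 1 + s * (if i = k then (1:ℝ) else 0)) : Fin N → ℝ)
            = (fun i => 1 + s * (if i = k then 1 else 0)) by simp, quad] at h0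
      have split : ∀ i j : Fin N, M i j * (1 + s * (if i = k then (1:ℝ) else 0))
            * (1 + s * (if j = k then (1:ℝ) else 0))
          = M i j + s * (if i = k then M i j else 0) + s * (if j = k then M i j else 0)
            + s ^ 2 * ((if i = k then (1:ℝ) else 0) * (if j = k then M i j else 0)) := by
        intro i j
        rcases eq_or_ne i k with h1 | h1 <;> rcases eq_or_ne j k with h2 | h2 <;>
          simp [h1, h2] <;> ring
      simp only [split, Finset.sum_add_distrib] at h0
      have D0 : ∑ i : Fin N, ∑ j, M i j = 0 := by
        simp only [rowM, Finset.sum_sub_distrib]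
        rw [Finset.sum_comm (f := fun i j => A j i)]
        simp
      have D1 : ∑ i : Fin N, ∑ j, (if i = k then M i j else 0) = Q := by
        have : ∀ i : Fin N, ∑ j, (if i = k then M i j else 0)
            = if i = k then ∑ j, M i j else 0 := by
          intro i; split <;> simp
        simp only [this, Finset.sum_ite_eq', Finset.mem_univ, if_true, rowM, hQ]
      have D2 : ∑ i : Fin N, ∑ j, (if j = k then M i j else 0) = Q := by
        simp only [Finset.sum_ite_eq', Finset.mem_univ, if_true, colM k, hQ]
      have D3 : ∑ i : Fin N, (if i = k then (1:ℝ) else 0) * ∑ j, (if j = k then M i j else 0)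
          = M k k := by
        simp only [Finset.sum_ite_eq', Finset.mem_univ, if_true, ite_mul, one_mul, zero_mul]
      simp only [← Finset.mul_sum] at h0
      rw [D0, D1, D2, D3] at h0
      linarith
    have hs := hq (-Q / (M k k + 1))
    have hm1 : (0:ℝ) < M k k + 1 := by linarith
    have h2 : 0 ≤ (2 * (-Q / (M k k + 1)) * Q + (-Q / (M k k + 1)) ^ 2 * M k k)
        * (M k k + 1) ^ 2 := mul_nonneg hs (by positivity)
    have h3 : (2 * (-Q / (M k k + 1)) * Q + (-Q / (M k k + 1)) ^ 2 * M k k)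
        * (M k k + 1) ^ 2 = -(Q ^ 2 * (M k k + 2)) := by
      field_simp
      ring
    rw [h3] at h2
    have hQ2 : Q ^ 2 = 0 := le_antisymm (by nlinarith) (sq_nonneg Q)
    have hQ0 : Q = 0 := by
      have := sq_eq_zero_iff.mp hQ2
      exact this
    have : (∑ j, A k j) - (∑ j, A j k) = 0 := by rw [← hQ]; exact hQ0
    linarith
end

section
/- Let F : ℝⁿ → ℝⁿ be continuous on a nonempty compact convex set D, and suppose D_k is a sequence of nonempty compact convex sets converging to D in Hausdorff distance, each VI(D_k, F) and VI(D, F) having unique solutions x_k* and x* respectively (e.g., because F is strongly monotone). Then x_k* → x* as k → ∞. -/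
open scoped RealInnerProductSpace
open Filter

/-- Key lemma: if along a sequence of indices going to infinity the VI solutions converge
to some point `x`, then `x` solves `VI(D, F)` and hence equals `xs`. -/
lemma vi_limit_is_solution {n : ℕ}
    (D : Set (EuclideanSpace ℝ (Fin n)))
    (hDne : D.Nonempty) (hDc : IsCompact D)
    (Dk : ℕ → Set (EuclideanSpace ℝ (Fin n)))
    (hDk : ∀ k, (Dk k).Nonempty ∧ IsCompact (Dk k) ∧ Convex ℝ (Dk k))
    (hH : Tendsto (fun k => Metric.hausdorffDist (Dk k) D) atTop (nhds 0))
    (F : EuclideanSpace ℝ (Fin n) → EuclideanSpace ℝ (Fin n)) (hF : Continuous F)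
    (xk : ℕ → EuclideanSpace ℝ (Fin n))
    (hxk : ∀ k, xk k ∈ Dk k ∧ ∀ y ∈ Dk k, 0 ≤ ⟪y - xk k, F (xk k)⟫)
    (g : ℕ → ℕ) (hg : Tendsto g atTop atTop)
    (x : EuclideanSpace ℝ (Fin n))
    (hx : Tendsto (fun k => xk (g k)) atTop (nhds x)) :
    x ∈ D ∧ ∀ y ∈ D, 0 ≤ ⟪y - x, F x⟫ := by
  have hne_top : ∀ k, EMetric.hausdorffEdist (Dk k) D ≠ ⊤ := fun k =>
    Metric.hausdorffEdist_ne_top_of_nonempty_of_bounded (hDk k).1 hDne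
      (hDk k).2.1.isBounded hDc.isBounded
  have hHg : Tendsto (fun k => Metric.hausdorffDist (Dk (g k)) D) atTop (nhds 0) :=
    hH.comp hg
  -- x ∈ D
  have hxD : x ∈ D := by
    have h1 : ∀ k, Metric.infDist (xk (g k)) D ≤ Metric.hausdorffDist (Dk (g k)) D :=
      fun k => Metric.infDist_le_hausdorffDist_of_mem (hxk (g k)).1 (hne_top (g k))
    have h2 : Tendsto (fun k => Metric.infDist (xk (g k)) D) atTop (nhds (Metric.infDist x D)) :=
      ((Metric.continuous_infDist_pt D).tendsto x).comp hx
    have h3 : Metric.infDist x D ≤ 0 :=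
      le_of_tendsto_of_tendsto' h2 hHg h1
    have h4 : Metric.infDist x D = 0 := le_antisymm h3 Metric.infDist_nonneg
    exact (hDc.isClosed.mem_iff_infDist_zero hDne).2 h4
  refine ⟨hxD, fun y hy => ?_⟩
  -- approximate y by points in Dk (g k)
  have hyk : ∀ k, ∃ z ∈ Dk (g k), Metric.infDist y (Dk (g k)) = dist y z :=
    fun k => (hDk (g k)).2.1.exists_infDist_eq_dist (hDk (g k)).1 y
  choose yk hykmem hykdist using hyk
  have hyk_tendsto : Tendsto yk atTop (nhds y) := by
    rw [tendsto_iff_dist_tendsto_zero]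
    have hle : ∀ k, dist (yk k) y ≤ Metric.hausdorffDist (Dk (g k)) D := by
      intro k
      rw [dist_comm, ← hykdist k]
      calc Metric.infDist y (Dk (g k)) ≤ Metric.hausdorffDist D (Dk (g k)) :=
            Metric.infDist_le_hausdorffDist_of_mem hy
              (by rw [EMetric.hausdorffEdist_comm]; exact hne_top (g k))
        _ = Metric.hausdorffDist (Dk (g k)) D := Metric.hausdorffDist_comm
    exact squeeze_zero (fun k => dist_nonneg) hle hHg
  have hinner : Tendsto (fun k => ⟪yk k - xk (g k), F (xk (g k))⟫) atTop
      (nhds ⟪y - x, F x⟫) :=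
    Filter.Tendsto.inner (hyk_tendsto.sub hx) ((hF.tendsto x).comp hx)
  exact ge_of_tendsto' hinner (fun k => (hxk (g k)).2 (yk k) (hykmem k))

/-- Continuity of the VI solution map in the constraint set: if compact convex sets
`Dk` converge to `D` in Hausdorff distance, `F` is continuous, and each `VI(Dk, F)` and
`VI(D, F)` has a unique solution `xk k` resp. `x*`, then `xk k → x*`. -/
theorem vi_solution_continuity_in_constraint {n : ℕ}
    (D : Set (EuclideanSpace ℝ (Fin n)))
    (hDne : D.Nonempty) (hDc : IsCompact D) (hDv : Convex ℝ D)
    (Dk : ℕ → Set (EuclideanSpace ℝ (Fin n)))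
    (hDk : ∀ k, (Dk k).Nonempty ∧ IsCompact (Dk k) ∧ Convex ℝ (Dk k))
    (hH : Tendsto (fun k => Metric.hausdorffDist (Dk k) D) atTop (nhds 0))
    (F : EuclideanSpace ℝ (Fin n) → EuclideanSpace ℝ (Fin n)) (hF : Continuous F)
    (xk : ℕ → EuclideanSpace ℝ (Fin n))
    (hxk : ∀ k, xk k ∈ Dk k ∧ ∀ y ∈ Dk k, 0 ≤ ⟪y - xk k, F (xk k)⟫)
    (huniqk : ∀ k x, x ∈ Dk k → (∀ y ∈ Dk k, 0 ≤ ⟪y - x, F x⟫) → x = xk k)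
    (xs : EuclideanSpace ℝ (Fin n))
    (hxs : xs ∈ D ∧ ∀ y ∈ D, 0 ≤ ⟪y - xs, F xs⟫)
    (huniq : ∀ x, x ∈ D → (∀ y ∈ D, 0 ≤ ⟪y - x, F x⟫) → x = xs) :
    Tendsto xk atTop (nhds xs) := by
  have hne_top : ∀ k, EMetric.hausdorffEdist (Dk k) D ≠ ⊤ := fun k =>
    Metric.hausdorffEdist_ne_top_of_nonempty_of_bounded (hDk k).1 hDne
      (hDk k).2.1.isBounded hDc.isBounded
  apply tendsto_of_subseq_tendsto
  intro ns hns
  -- eventually Hausdorff distance ≤ 1, so xk (ns n) lies in a compact set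
  obtain ⟨N, hN⟩ := (Filter.eventually_atTop).1
    (hH.eventually (eventually_le_nhds (by norm_num : (0:ℝ) < 1)))
  obtain ⟨M, hM⟩ := (Filter.tendsto_atTop_atTop.1 hns) N
  set K : Set (EuclideanSpace ℝ (Fin n)) := Metric.cthickening 1 D with hK
  have hKc : IsCompact K := hDc.cthickening
  have hmemK : ∀ m, xk (ns (m + M)) ∈ K := by
    intro m
    have h1 : Metric.infDist (xk (ns (m + M))) D ≤ Metric.hausdorffDist (Dk (ns (m + M))) D :=
      Metric.infDist_le_hausdorffDist_of_mem (hxk _).1 (hne_top _)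
    have h2 : Metric.hausdorffDist (Dk (ns (m + M))) D ≤ 1 :=
      hN _ (hM (m + M) (Nat.le_add_left M m))
    rw [hK, Metric.mem_cthickening_iff]
    have hfin : Metric.infEDist (xk (ns (m + M))) D ≠ ⊤ := Metric.infEdist_ne_top hDne
    rw [← ENNReal.ofReal_toReal hfin]
    exact ENNReal.ofReal_le_ofReal (show Metric.infDist _ D ≤ 1 from le_trans h1 h2)
  obtain ⟨x, _, φ, hφ, hconv⟩ :=
    hKc.tendsto_subseq (x := fun m => xk (ns (m + M))) hmemK
  refine ⟨fun m => φ m + M, ?_⟩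
  have hg : Tendsto (fun m => ns (φ m + M)) atTop atTop :=
    hns.comp ((tendsto_add_atTop_nat M).comp hφ.tendsto_atTop)
  have hconv' : Tendsto (fun m => xk (ns (φ m + M))) atTop (nhds x) := hconv
  have hsol := vi_limit_is_solution D hDne hDc Dk hDk hH F hF xk hxk
    (fun m => ns (φ m + M)) hg x hconv'
  have hxeq : x = xs := huniq x hsol.1 hsol.2
  rwa [hxeq] at hconv'
end
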